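/- Let ν > 0, ν ≠ 1. The functions θ₊(a) = a^{−1}(1 + a)^{(1−ν)/2} and θ₋(a) = a^{−1}(1 − a)^{(1−ν)/2} solve the ordinary differential equation (1 − a²)[y''(a) + (2/a)y'(a)] − (1 + ν) a y'(a) − ((1−ν)/2 − 1)((1−ν)/2 − 2) y(a) = 0 on (0,1), and their Wronskian satisfies θ₊(a)θ₋'(a) − θ₊'(a)θ₋(a) = (ν − 1) a^{−2}(1 − a²)^{−(1+ν)/2} for all a ∈ (0,1). -/

import Mathlib

noncomputable section

open Real

/-- `θ₊(a) = a⁻¹(1+a)^{(1-ν)/2}`. -/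
def thetaPlus (ν a : ℝ) : ℝ := a⁻¹ * (1 + a) ^ ((1 - ν) / 2)

/-- `θ₋(a) = a⁻¹(1-a)^{(1-ν)/2}`. -/
def thetaMinus (ν a : ℝ) : ℝ := a⁻¹ * (1 - a) ^ ((1 - ν) / 2)

def DPlus (ν a : ℝ) : ℝ :=
  -(a ^ 2)⁻¹ * (1 + a) ^ ((1 - ν) / 2)
    + a⁻¹ * ((1 - ν) / 2 * (1 + a) ^ ((1 - ν) / 2 - 1))

def DMinus (ν a : ℝ) : ℝ :=
  -(a ^ 2)⁻¹ * (1 - a) ^ ((1 - ν) / 2)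
    - a⁻¹ * ((1 - ν) / 2 * (1 - a) ^ ((1 - ν) / 2 - 1))

lemma hd_plus (p : ℝ) {a : ℝ} (ha : 0 < a) :
    HasDerivAt (fun x : ℝ => (1 + x) ^ p) (p * (1 + a) ^ (p - 1)) a := by
  have := ((hasDerivAt_id a).const_add 1).rpow_const (p := p) (Or.inl (by positivity))
  convert this using 1 <;> simp

lemma hd_minus (p : ℝ) {a : ℝ} (ha1 : a < 1) :
    HasDerivAt (fun x : ℝ => (1 - x) ^ p) (-(p * (1 - a) ^ (p - 1))) a := by
  have hm : HasDerivAt (fun x : ℝ => 1 - x) (-1) a := by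
    simpa using (hasDerivAt_id a).const_sub 1
  have := hm.rpow_const (p := p) (Or.inl (by intro h; rw [sub_eq_zero] at h; linarith))
  convert this using 1
  ring

lemma hasDerivAt_thetaPlus (ν : ℝ) {a : ℝ} (ha : 0 < a) :
    HasDerivAt (thetaPlus ν) (DPlus ν a) a := by
  have := (hasDerivAt_inv ha.ne').fun_mul (hd_plus ((1 - ν) / 2) ha)
  unfold thetaPlus DPlus
  convert this using 1
  all_goals ring

lemma hasDerivAt_thetaMinus (ν : ℝ) {a : ℝ} (ha : 0 < a) (ha1 : a < 1) :
    HasDerivAt (thetaMinus ν) (DMinus ν a) a := by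
  have := (hasDerivAt_inv ha.ne').fun_mul (hd_minus ((1 - ν) / 2) ha1)
  unfold thetaMinus DMinus
  refine this.congr_deriv ?_
  all_goals ring

lemma hasDerivAt_inv_sq {a : ℝ} (ha : 0 < a) :
    HasDerivAt (fun x : ℝ => (x ^ 2)⁻¹) (-(2 / a ^ 3)) a := by
  have := (hasDerivAt_pow 2 a).fun_inv (by positivity)
  refine this.congr_deriv ?_
  field_simp
  ring

lemma hasDerivAt_DPlus (ν : ℝ) {a : ℝ} (ha : 0 < a) :
    HasDerivAt (DPlus ν)
      (2 / a ^ 3 * (1 + a) ^ ((1 - ν) / 2)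
        - (a ^ 2)⁻¹ * ((1 - ν) / 2 * (1 + a) ^ ((1 - ν) / 2 - 1))
        - (a ^ 2)⁻¹ * ((1 - ν) / 2 * (1 + a) ^ ((1 - ν) / 2 - 1))
        + a⁻¹ * ((1 - ν) / 2 * (((1 - ν) / 2 - 1) * (1 + a) ^ ((1 - ν) / 2 - 2)))) a := by
  have h := (((hasDerivAt_inv_sq ha).fun_neg).fun_mul (hd_plus ((1 - ν) / 2) ha)).fun_add
    ((hasDerivAt_inv ha.ne').fun_mul ((hd_plus ((1 - ν) / 2 - 1) ha).const_mul ((1 - ν) / 2)))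
  unfold DPlus
  rw [show (1 - ν) / 2 - 2 = (1 - ν) / 2 - 1 - 1 by ring]
  refine h.congr_deriv ?_
  all_goals ring

lemma hasDerivAt_DMinus (ν : ℝ) {a : ℝ} (ha : 0 < a) (ha1 : a < 1) :
    HasDerivAt (DMinus ν)
      (2 / a ^ 3 * (1 - a) ^ ((1 - ν) / 2)
        + (a ^ 2)⁻¹ * ((1 - ν) / 2 * (1 - a) ^ ((1 - ν) / 2 - 1))
        + (a ^ 2)⁻¹ * ((1 - ν) / 2 * (1 - a) ^ ((1 - ν) / 2 - 1))
        + a⁻¹ * ((1 - ν) / 2 * (((1 - ν) / 2 - 1) * (1 - a) ^ ((1 - ν) / 2 - 2)))) a := by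
  have h := (((hasDerivAt_inv_sq ha).fun_neg).fun_mul (hd_minus ((1 - ν) / 2) ha1)).fun_sub
    ((hasDerivAt_inv ha.ne').fun_mul ((hd_minus ((1 - ν) / 2 - 1) ha1).const_mul ((1 - ν) / 2)))
  unfold DMinus
  rw [show (1 - ν) / 2 - 2 = (1 - ν) / 2 - 1 - 1 by ring]
  refine h.congr_deriv ?_
  all_goals ring

lemma deriv2_thetaPlus (ν : ℝ) {a : ℝ} (ha : a ∈ Set.Ioo (0:ℝ) 1) :
    deriv (deriv (thetaPlus ν)) a =
      2 / a ^ 3 * (1 + a) ^ ((1 - ν) / 2)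
        - (a ^ 2)⁻¹ * ((1 - ν) / 2 * (1 + a) ^ ((1 - ν) / 2 - 1))
        - (a ^ 2)⁻¹ * ((1 - ν) / 2 * (1 + a) ^ ((1 - ν) / 2 - 1))
        + a⁻¹ * ((1 - ν) / 2 * (((1 - ν) / 2 - 1) * (1 + a) ^ ((1 - ν) / 2 - 2))) := by
  have hev : deriv (thetaPlus ν) =ᶠ[nhds a] DPlus ν := by
    filter_upwards [isOpen_Ioi.mem_nhds (show a ∈ Set.Ioi (0:ℝ) from ha.1)] with x hx
    exact (hasDerivAt_thetaPlus ν hx).deriv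
  rw [hev.deriv_eq, (hasDerivAt_DPlus ν ha.1).deriv]

lemma deriv2_thetaMinus (ν : ℝ) {a : ℝ} (ha : a ∈ Set.Ioo (0:ℝ) 1) :
    deriv (deriv (thetaMinus ν)) a =
      2 / a ^ 3 * (1 - a) ^ ((1 - ν) / 2)
        + (a ^ 2)⁻¹ * ((1 - ν) / 2 * (1 - a) ^ ((1 - ν) / 2 - 1))
        + (a ^ 2)⁻¹ * ((1 - ν) / 2 * (1 - a) ^ ((1 - ν) / 2 - 1))
        + a⁻¹ * ((1 - ν) / 2 * (((1 - ν) / 2 - 1) * (1 - a) ^ ((1 - ν) / 2 - 2))) := by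
  have hev : deriv (thetaMinus ν) =ᶠ[nhds a] DMinus ν := by
    filter_upwards [isOpen_Ioo.mem_nhds ha] with x hx
    exact (hasDerivAt_thetaMinus ν hx.1 hx.2).deriv
  rw [hev.deriv_eq, (hasDerivAt_DMinus ν ha.1 ha.2).deriv]

/-- `θ₊, θ₋` solve the self-similar ODE
`(1-a²)[y'' + (2/a)y'] - (1+ν)ay' - ((1-ν)/2-1)((1-ν)/2-2)y = 0` on `(0,1)`
and their Wronskian is `θ₊θ₋' - θ₊'θ₋ = (ν-1)a^{-2}(1-a²)^{-(1+ν)/2}`. -/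
theorem self_similar_fundamental_system (ν : ℝ) (hν0 : 0 < ν) (hν1 : ν ≠ 1) :
    (∀ a ∈ Set.Ioo (0 : ℝ) 1,
      (1 - a ^ 2) * (deriv (deriv (thetaPlus ν)) a + 2 / a * deriv (thetaPlus ν) a)
        - (1 + ν) * a * deriv (thetaPlus ν) a
        - ((1 - ν) / 2 - 1) * ((1 - ν) / 2 - 2) * thetaPlus ν a = 0) ∧
    (∀ a ∈ Set.Ioo (0 : ℝ) 1,
      (1 - a ^ 2) * (deriv (deriv (thetaMinus ν)) a + 2 / a * deriv (thetaMinus ν) a)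
        - (1 + ν) * a * deriv (thetaMinus ν) a
        - ((1 - ν) / 2 - 1) * ((1 - ν) / 2 - 2) * thetaMinus ν a = 0) ∧
    (∀ a ∈ Set.Ioo (0 : ℝ) 1,
      thetaPlus ν a * deriv (thetaMinus ν) a - deriv (thetaPlus ν) a * thetaMinus ν a
        = (ν - 1) * a ^ (-(2 : ℝ)) * (1 - a ^ 2) ^ (-(1 + ν) / 2)) := by
  refine ⟨?_, ?_, ?_⟩
  · rintro a ⟨ha0, ha1⟩
    have hp : (0:ℝ) < 1 + a := by linarith
    have e1 : (1 + a) ^ ((1 - ν) / 2) = (1 + a) * (1 + a) ^ ((1 - ν) / 2 - 1) := by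
      rw [show (1 - ν) / 2 = 1 + ((1 - ν) / 2 - 1) by ring, Real.rpow_add hp, Real.rpow_one]
      try (congr 2; ring)
    have e2 : (1 + a) ^ ((1 - ν) / 2 - 1) = (1 + a) * (1 + a) ^ ((1 - ν) / 2 - 2) := by
      rw [show (1 - ν) / 2 - 1 = 1 + ((1 - ν) / 2 - 2) by ring, Real.rpow_add hp, Real.rpow_one]
      try (congr 2; ring)
    rw [deriv2_thetaPlus ν ⟨ha0, ha1⟩, (hasDerivAt_thetaPlus ν ha0).deriv]
    unfold thetaPlus DPlus
    rw [e1, e2]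
    field_simp
    ring
  · rintro a ⟨ha0, ha1⟩
    have hp : (0:ℝ) < 1 - a := by linarith
    have e1 : (1 - a) ^ ((1 - ν) / 2) = (1 - a) * (1 - a) ^ ((1 - ν) / 2 - 1) := by
      rw [show (1 - ν) / 2 = 1 + ((1 - ν) / 2 - 1) by ring, Real.rpow_add hp, Real.rpow_one]
      try (congr 2; ring)
    have e2 : (1 - a) ^ ((1 - ν) / 2 - 1) = (1 - a) * (1 - a) ^ ((1 - ν) / 2 - 2) := by
      rw [show (1 - ν) / 2 - 1 = 1 + ((1 - ν) / 2 - 2) by ring, Real.rpow_add hp, Real.rpow_one]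
      try (congr 2; ring)
    rw [deriv2_thetaMinus ν ⟨ha0, ha1⟩, (hasDerivAt_thetaMinus ν ha0 ha1).deriv]
    unfold thetaMinus DMinus
    rw [e1, e2]
    field_simp
    ring
  · rintro a ⟨ha0, ha1⟩
    have hp : (0:ℝ) < 1 + a := by linarith
    have hm : (0:ℝ) < 1 - a := by linarith
    have e1 : (1 + a) ^ ((1 - ν) / 2) = (1 + a) * (1 + a) ^ ((1 - ν) / 2 - 1) := by
      rw [show (1 - ν) / 2 = 1 + ((1 - ν) / 2 - 1) by ring, Real.rpow_add hp, Real.rpow_one]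
      try (congr 2; ring)
    have e2 : (1 - a) ^ ((1 - ν) / 2) = (1 - a) * (1 - a) ^ ((1 - ν) / 2 - 1) := by
      rw [show (1 - ν) / 2 = 1 + ((1 - ν) / 2 - 1) by ring, Real.rpow_add hm, Real.rpow_one]
      try (congr 2; ring)
    rw [(hasDerivAt_thetaPlus ν ha0).deriv, (hasDerivAt_thetaMinus ν ha0 ha1).deriv]
    have hr2 : a ^ (-(2:ℝ)) = (a ^ 2)⁻¹ := by
      rw [Real.rpow_neg ha0.le, show ((2:ℝ)) = ((2:ℕ):ℝ) by norm_num, Real.rpow_natCast]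
    have hfac : (1 - a ^ 2 : ℝ) ^ (-(1 + ν) / 2)
        = (1 - a) ^ ((1 - ν) / 2 - 1) * (1 + a) ^ ((1 - ν) / 2 - 1) := by
      rw [show (1 - a ^ 2 : ℝ) = (1 - a) * (1 + a) by ring,
        Real.mul_rpow hm.le hp.le, show -(1 + ν) / 2 = (1 - ν) / 2 - 1 by ring]
    rw [hr2, hfac]
    unfold thetaPlus thetaMinus DPlus DMinus
    rw [e1, e2]
    field_simp
    ring
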